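/- Let G be a finite group, n a positive integer, u, g ∈ G commuting elements, and m an integer with gcd(m, |G|) = 1 and m ≡ 1 (mod n). Then the m-th power map a ↦ aᵐ is a bijection from G_n(u, g) to G_n(u, gᵐ). -/
import Mathlib

private lemma zpow_card {G : Type*} [Group G] [Finite G] (a : G) (c : ℤ) :
    a ^ ((Nat.card G : ℤ) * c) = 1 := by
  rw [zpow_mul, zpow_natCast, pow_card_eq_one', one_zpow]

private lemma key_lemma {G : Type*} [Group G] {n : ℕ} {u a : G} (j : ℤ)
    (h1 : (a * u⁻¹) ^ n = a ^ n) (hu : Commute u (a ^ n)) :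
    (a ^ (1 + j * (n : ℤ)) * u⁻¹) ^ n = (a ^ (1 + j * (n : ℤ))) ^ n ∧
    (a ^ (1 + j * (n : ℤ))) ^ n = (a ^ n) ^ (1 + j * (n : ℤ)) := by
  set h : G := a ^ n with hh
  have hah : Commute a h := (Commute.refl a).pow_right n
  have hk : a ^ (1 + j * (n : ℤ)) = a * h ^ j := by
    rw [zpow_add, zpow_one, mul_comm j, zpow_mul, zpow_natCast]
  have hc : Commute (a * u⁻¹) (h ^ j) := (hah.mul_left hu.inv_left).zpow_right j
  have h2 : (a ^ (1 + j * (n : ℤ))) ^ n = h ^ (1 + j * (n : ℤ)) := by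
    rw [← zpow_natCast (a ^ (1 + j * (n:ℤ))) n, ← zpow_mul, mul_comm, zpow_mul, zpow_natCast]
  refine ⟨?_, h2⟩
  have : a ^ (1 + j * (n : ℤ)) * u⁻¹ = (a * u⁻¹) * h ^ j := by
    rw [hk, mul_assoc, mul_assoc, ((hu.inv_left).zpow_right j).eq]
  rw [this, hc.mul_pow, h1, h2, ← zpow_natCast (h ^ j) n, ← zpow_mul, zpow_add, zpow_one]

theorem stmt_3 {G : Type*} [Group G] [Finite G] (n : ℕ) (hn : 0 < n) (u g : G)
    (hug : u * g = g * u) (m : ℤ) (hm : Int.gcd m (Nat.card G) = 1)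
    (hm1 : m ≡ 1 [ZMOD (n : ℤ)]) :
    Set.BijOn (fun a => a ^ m)
      {a : G | (a * u⁻¹) ^ n = a ^ n ∧ a ^ n = g}
      {a : G | (a * u⁻¹) ^ n = a ^ n ∧ a ^ n = g ^ m} := by
  obtain ⟨c, hc⟩ := hm1.dvd
  have hmj : m = 1 + (-c) * (n : ℤ) := by linarith [hc]
  have hcop1 : IsCoprime m (n : ℤ) := ⟨1, c, by linarith⟩
  have hcop2 : IsCoprime m (Nat.card G : ℤ) := Int.isCoprime_iff_gcd_eq_one.mpr hm
  obtain ⟨s, t, hst⟩ := hcop1.mul_right hcop2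
  -- hst : s * m + t * (n * card) = 1
  have hsj : s = 1 + (-(t * (Nat.card G : ℤ)) + s * c) * (n : ℤ) := by
    linear_combination hst - s * hmj
  have hms : m * s = 1 + (Nat.card G : ℤ) * (-(t * (n : ℤ))) := by
    linear_combination hst
  have hpow_ms : ∀ x : G, x ^ (m * s) = x := by
    intro x
    rw [hms, zpow_add, zpow_one, zpow_card, mul_one]
  constructor
  · rintro a ⟨ha1, ha2⟩
    have hu' : Commute u (a ^ n) := by rw [ha2]; exact hug
    obtain ⟨k1, k2⟩ := key_lemma (-c) ha1 hu'
    rw [← hmj] at k1 k2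
    exact ⟨k1, by rw [k2, ha2]⟩
  constructor
  · intro a _ b _ hab
    simp only at hab
    have hsm : ∀ x : G, x ^ (s * m) = x := fun x => by rw [mul_comm]; exact hpow_ms x
    calc a = a ^ (s * m) := (hsm a).symm
    _ = (a ^ m) ^ s := by rw [mul_comm, zpow_mul]
    _ = (b ^ m) ^ s := by rw [hab]
    _ = b := by rw [← zpow_mul, mul_comm, hsm b]
  · rintro b ⟨hb1, hb2⟩
    have hu' : Commute u (b ^ n) := by
      rw [hb2]; exact (show Commute u g from hug).zpow_right m
    obtain ⟨k1, k2⟩ := key_lemma (-(t * (Nat.card G : ℤ)) + s * c) hb1 hu'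
    rw [← hsj] at k1 k2
    refine ⟨b ^ s, ⟨k1, ?_⟩, ?_⟩
    · rw [k2, hb2, ← zpow_mul, hpow_ms]
    · show (b ^ s) ^ m = b
      rw [← zpow_mul, mul_comm, hpow_ms]
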